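/- Let X : ℤ → ℝ be a homogeneous second order recurrence sequence with constant coefficients, i.e. there exist p, q ∈ ℝ such that X(n) = p·X(n−1) + q·X(n−2) for all n ∈ ℤ. Let a, b, c, d, e, m be integers and let k be a nonnegative integer such that Δ₁ = X(d−c)·X(e−b) − X(e−c)·X(d−b) ≠ 0 and Δ₂ = X(d−a)·X(e−c) − X(e−a)·X(d−c) ≠ 0. Then ∑_{r=0}^{k} C(k,r) · ((X(d−c)·X(e−b) − X(e−c)·X(d−b)) / (X(d−a)·X(e−c) − X(e−a)·X(d−c)))^r · X(m − (b−c)·k + (b−a)·r) = ((X(d−a)·X(e−b) − X(e−a)·X(d−b)) / (X(d−a)·X(e−c) − X(e−a)·X(d−c)))^k · X(m), where C(k,r) denotes the binomial coefficient. -/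

import Mathlib

-- vanishing lemma for solutions with q ≠ 0
lemma my_vanish (Y : ℤ → ℝ) (p q : ℝ) (hq : q ≠ 0)
    (hY : ∀ n : ℤ, Y (n + 2) = p * Y (n + 1) + q * Y n)
    (h1 : Y 1 = 0) (h2 : Y 2 = 0) : ∀ n, Y n = 0 := by
  have key : ∀ n : ℤ, Y (n + 1) = 0 ∧ Y (n + 2) = 0 := by
    intro n
    induction n using Int.induction_on with
    | zero => exact ⟨by simpa using h1, by simpa using h2⟩
    | succ i ih =>
      refine ⟨?_, ?_⟩
      · rw [show (i:ℤ)+1+1 = i+2 by ring]; exact ih.2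
      · have h := hY (i + 1)
        rw [show (i:ℤ)+1+1 = i+2 by ring, ih.1, ih.2] at h
        rw [h]; ring
    | pred i ih =>
      refine ⟨?_, ?_⟩
      · have h := hY (-(i:ℤ))
        rw [ih.1, ih.2] at h
        have hz : q * Y (-(i:ℤ)) = 0 := by linarith
        have := (mul_eq_zero.mp hz).resolve_left hq
        rw [show -(i:ℤ)-1+1 = -(i:ℤ) by ring]; exact this
      · rw [show -(i:ℤ)-1+2 = -(i:ℤ)+1 by ring]; exact ih.1
  intro n
  have h := key (n - 2)
  rw [show n-2+2 = n by ring] at h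
  exact h.2

lemma my_dep (X : ℤ → ℝ) (p q : ℝ)
    (hX : ∀ n : ℤ, X n = p * X (n - 1) + q * X (n - 2)) (a b c : ℤ) :
    ∃ α β γ : ℝ, ¬(α = 0 ∧ β = 0 ∧ γ = 0) ∧
      ∀ n : ℤ, α * X (n - a) + β * X (n - b) + γ * X (n - c) = 0 := by
  have hXs : ∀ (x n : ℤ), X (n + 2 - x) = p * X (n + 1 - x) + q * X (n - x) := by
    intro x n
    have h := hX (n + 2 - x)
    rw [show n+2-x-1 = n+1-x by ring, show n+2-x-2 = n-x by ring] at h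
    exact h
  by_cases hq : q = 0
  · by_cases hp : p = 0
    · refine ⟨1, 0, 0, by simp, ?_⟩
      have hz : ∀ n : ℤ, X n = 0 := by
        intro n; have h := hX n; rw [hp, hq] at h; simpa using h
      intro n; simp [hz]
    · -- q = 0, p ≠ 0
      have hstep : ∀ n : ℤ, X n = p * X (n - 1) := by
        intro n; have h := hX n; rw [hq] at h; simpa using h
      have hgen : ∀ n : ℤ, X n = p ^ n * X 0 := by
        intro n
        induction n using Int.induction_on with
        | zero => simp
        | succ i ih =>
          have h := hstep ((i:ℤ) + 1)
          rw [show (i:ℤ)+1-1 = (i:ℤ) by ring, ih] at h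
          rw [h, zpow_add₀ hp, zpow_one]; ring
        | pred i ih =>
          have h := hstep (-(i:ℤ))
          rw [show -(i:ℤ)-1 = -(i:ℤ)-1 from rfl] at h
          rw [ih] at h
          have hinv : X (-(i:ℤ) - 1) = p ^ (-(i:ℤ) - 1) * X 0 := by
            have hp' : p ^ (-(i:ℤ)) = p * p ^ (-(i:ℤ) - 1) := by
              rw [zpow_sub_one₀ hp]; field_simp
            rw [hp'] at h
            exact (mul_left_cancel₀ hp (by linear_combination h)).symm
          exact hinv
      refine ⟨p ^ (a:ℤ), -(p ^ (b:ℤ)), 0, ?_, ?_⟩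
      · intro ⟨ha, _, _⟩; exact zpow_ne_zero a hp ha
      · intro n
        rw [hgen (n - a), hgen (n - b)]
        have e : p ^ (a:ℤ) * p ^ (n-a) = p ^ (b:ℤ) * p ^ (n-b) := by
          rw [← zpow_add₀ hp, ← zpow_add₀ hp, show a+(n-a) = b+(n-b) by ring]
        linear_combination (X 0) * e
  · -- q ≠ 0
    by_cases hva : X (1 - a) = 0 ∧ X (2 - a) = 0
    · refine ⟨1, 0, 0, by simp, ?_⟩
      have hz := my_vanish (fun n => X (n - a)) p q hq
        (fun n => hXs a n) hva.1 hva.2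
      intro n; simpa using hz n
    · by_cases hdet : X (1-a) * X (2-b) - X (2-a) * X (1-b) = 0
      · -- degenerate: v_b parallel to v_a, v_a ≠ 0
        rcases not_and_or.mp hva with h1a | h2a
        · refine ⟨X (1-b), -(X (1-a)), 0, ?_, ?_⟩
          · intro ⟨_, hb, _⟩; exact h1a (by linarith [neg_eq_zero.mp hb])
          · have hz := my_vanish (fun n => X (1-b) * X (n - a) + -(X (1-a)) * X (n - b)) p q hq
              (by intro n; rw [hXs a n, hXs b n]; ring)
              (by ring)
              (by nlinarith [hdet])
            intro n; have := hz n; linarith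
        · refine ⟨X (2-b), -(X (2-a)), 0, ?_, ?_⟩
          · intro ⟨_, hb, _⟩; exact h2a (by linarith [neg_eq_zero.mp hb])
          · have hz := my_vanish (fun n => X (2-b) * X (n - a) + -(X (2-a)) * X (n - b)) p q hq
              (by intro n; rw [hXs a n, hXs b n]; ring)
              (by nlinarith [hdet])
              (by ring)
            intro n; have := hz n; linarith
      · -- Cramer triple
        refine ⟨X (1-b) * X (2-c) - X (2-b) * X (1-c),
               X (1-c) * X (2-a) - X (2-c) * X (1-a),
               X (1-a) * X (2-b) - X (2-a) * X (1-b), ?_, ?_⟩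
        · intro ⟨_, _, hg⟩; exact hdet hg
        · have hz := my_vanish (fun n =>
              (X (1-b) * X (2-c) - X (2-b) * X (1-c)) * X (n - a) +
              (X (1-c) * X (2-a) - X (2-c) * X (1-a)) * X (n - b) +
              (X (1-a) * X (2-b) - X (2-a) * X (1-b)) * X (n - c)) p q hq
            (by intro n; rw [hXs a n, hXs b n, hXs c n]; ring)
            (by ring)
            (by ring)
          intro n; have := hz n; linarith

lemma my_pascal (f : ℕ → ℝ) (k : ℕ) :
    ∑ r ∈ Finset.range (k + 2), (((k+1).choose r : ℕ) : ℝ) * f r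
    = ∑ r ∈ Finset.range (k + 1), ((k.choose r : ℕ) : ℝ) * (f r + f (r+1)) := by
  rw [Finset.sum_range_succ' (fun r => (((k+1).choose r : ℕ) : ℝ) * f r) (k+1)]
  simp only [Nat.choose_succ_succ, Nat.cast_add, add_mul, Nat.choose_zero_right,
    Nat.cast_one, one_mul]
  rw [Finset.sum_add_distrib]
  have h2 : (∑ r ∈ Finset.range (k+1), ((k.choose (r+1) : ℕ) : ℝ) * f (r+1)) + f 0
      = ∑ r ∈ Finset.range (k+1), ((k.choose r : ℕ) : ℝ) * f r := by
    have h3 := Finset.sum_range_succ' (fun r => ((k.choose r : ℕ) : ℝ) * f r) (k+1)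
    rw [Finset.sum_range_succ (fun r => ((k.choose r : ℕ) : ℝ) * f r) (k+1)] at h3
    simp only [Nat.choose_succ_self, Nat.cast_zero, zero_mul, add_zero,
      Nat.choose_zero_right, Nat.cast_one, one_mul] at h3
    linarith [h3]
  rw [add_assoc, h2, ← Finset.sum_add_distrib]
  exact Finset.sum_congr rfl fun r _ => by ring

lemma my_binom (X : ℤ → ℝ) (s t : ℝ) (u v : ℤ)
    (hk : ∀ n : ℤ, s * X n = X (n - u) + t * X (n - u + v)) :
    ∀ (k : ℕ) (m : ℤ),
      ∑ r ∈ Finset.range (k + 1),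
        (k.choose r : ℝ) * t ^ r * X (m - u * (k : ℤ) + v * (r : ℤ)) = s ^ k * X m := by
  intro k
  induction k with
  | zero =>
    intro m
    rw [Finset.sum_range_one]
    norm_num
  | succ k ih =>
    intro m
    have hsum : ∑ r ∈ Finset.range (k+1), ((k.choose r : ℕ) : ℝ) *
          ((t ^ r * X (m - u * ((k:ℤ)+1) + v * (r:ℤ)))
           + (t ^ (r+1) * X (m - u * ((k:ℤ)+1) + v * ((r:ℤ)+1)))) = s ^ (k+1) * X m := by
      have e1 : s ^ (k+1) * X m = s * (s ^ k * X m) := by ring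
      rw [e1, ← ih m, Finset.mul_sum]
      refine (Finset.sum_congr rfl ?_).symm
      intro r _
      have h := hk (m - u * (k:ℤ) + v * (r:ℤ))
      rw [show m - u * (k:ℤ) + v * (r:ℤ) - u = m - u * ((k:ℤ)+1) + v * (r:ℤ) by ring,
        show m - u * ((k:ℤ)+1) + v * (r:ℤ) + v = m - u * ((k:ℤ)+1) + v * ((r:ℤ)+1) by ring] at h
      linear_combination ((k.choose r : ℕ) : ℝ) * t ^ r * h
    calc ∑ r ∈ Finset.range (k + 1 + 1),
          ((k+1).choose r : ℝ) * t ^ r * X (m - u * ((k+1:ℕ) : ℤ) + v * (r : ℤ))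
        = ∑ r ∈ Finset.range (k + 2),
            (((k+1).choose r : ℕ) : ℝ) * (t ^ r * X (m - u * ((k:ℤ)+1) + v * (r:ℤ))) := by
          refine Finset.sum_congr rfl ?_
          intro r _
          rw [show ((k+1:ℕ) : ℤ) = (k:ℤ)+1 by push_cast; ring]
          ring
      _ = ∑ r ∈ Finset.range (k + 1), ((k.choose r : ℕ) : ℝ) *
            ((t ^ r * X (m - u * ((k:ℤ)+1) + v * (r:ℤ)))
             + (t ^ (r+1) * X (m - u * ((k:ℤ)+1) + v * ((r:ℤ)+1)))) := by
          have hp2 := my_pascal (fun r => t ^ r * X (m - u * ((k:ℤ)+1) + v * (r:ℤ))) k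
          push_cast at hp2 ⊢
          convert hp2 using 1
      _ = s ^ (k+1) * X m := hsum

/-- Weighted binomial sum identity for a general homogeneous second order
linear recurrence sequence with constant coefficients. -/
theorem stmt_3 (X : ℤ → ℝ) (p q : ℝ)
    (hX : ∀ n : ℤ, X n = p * X (n - 1) + q * X (n - 2))
    (a b c d e m : ℤ) (k : ℕ)
    (h1 : X (d - c) * X (e - b) - X (e - c) * X (d - b) ≠ 0)
    (h2 : X (d - a) * X (e - c) - X (e - a) * X (d - c) ≠ 0) :
    ∑ r ∈ Finset.range (k + 1),
      (k.choose r : ℝ) *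
        ((X (d - c) * X (e - b) - X (e - c) * X (d - b)) /
            (X (d - a) * X (e - c) - X (e - a) * X (d - c))) ^ r *
        X (m - (b - c) * (k : ℤ) + (b - a) * (r : ℤ))
      = ((X (d - a) * X (e - b) - X (e - a) * X (d - b)) /
            (X (d - a) * X (e - c) - X (e - a) * X (d - c))) ^ k * X m := by
  obtain ⟨α, β, γ, hne, hdep⟩ := my_dep X p q hX a b c
  have hd := hdep d
  have he := hdep e
  have hβ : β ≠ 0 := by
    intro hβ0
    rw [hβ0] at hd he
    have hα : α = 0 := by
      have h := mul_eq_zero.mp (show α * (X (d-a) * X (e-c) - X (e-a) * X (d-c)) = 0 by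
        linear_combination X (e-c) * hd - X (d-c) * he)
      exact h.resolve_right h2
    have hγ : γ = 0 := by
      have h := mul_eq_zero.mp (show γ * (X (d-a) * X (e-c) - X (e-a) * X (d-c)) = 0 by
        linear_combination X (d-a) * he - X (e-a) * hd)
      exact h.resolve_right h2
    exact hne ⟨hα, hβ0, hγ⟩
  have hαD : α * (X (d-a) * X (e-c) - X (e-a) * X (d-c))
      = β * (X (d-c) * X (e-b) - X (e-c) * X (d-b)) := by
    linear_combination X (e-c) * hd - X (d-c) * he
  have hγD : γ * (X (d-a) * X (e-c) - X (e-a) * X (d-c))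
      = -(β * (X (d-a) * X (e-b) - X (e-a) * X (d-b))) := by
    linear_combination X (d-a) * he - X (e-a) * hd
  have key : ∀ n : ℤ, (X (d-a) * X (e-b) - X (e-a) * X (d-b)) * X (n - c)
      = (X (d-a) * X (e-c) - X (e-a) * X (d-c)) * X (n - b)
        + (X (d-c) * X (e-b) - X (e-c) * X (d-b)) * X (n - a) := by
    intro n
    have h := hdep n
    have h3 : β * ((X (d-a) * X (e-b) - X (e-a) * X (d-b)) * X (n - c))
        = β * ((X (d-a) * X (e-c) - X (e-a) * X (d-c)) * X (n - b)
            + (X (d-c) * X (e-b) - X (e-c) * X (d-b)) * X (n - a)) := by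
      linear_combination (-(X (d-a) * X (e-c) - X (e-a) * X (d-c))) * h
        + X (n-a) * hαD + X (n-c) * hγD
    exact mul_left_cancel₀ hβ h3
  have hrel : ∀ n : ℤ,
      ((X (d - a) * X (e - b) - X (e - a) * X (d - b)) /
          (X (d - a) * X (e - c) - X (e - a) * X (d - c))) * X n
      = X (n - (b - c)) +
        ((X (d - c) * X (e - b) - X (e - c) * X (d - b)) /
            (X (d - a) * X (e - c) - X (e - a) * X (d - c))) * X (n - (b - c) + (b - a)) := by
    intro n
    have h := key (n + c)
    rw [show n + c - c = n by ring, show n + c - b = n - (b - c) by ring,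
      show n + c - a = n - (b - c) + (b - a) by ring] at h
    field_simp
    linear_combination h
  exact my_binom X _ _ (b - c) (b - a) hrel k m
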